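/- Let j ≥ 2 be an integer. For every nonnegative integer n, the number of partitions of n in which no part appears more than j−1 times equals the number of partitions of n in which no part is a multiple of j. -/

import Mathlib

open Multiset

namespace GlaisherAux

/-- `j`-adic valuation. -/
def v (j i : ℕ) : ℕ := Nat.maxPowDiv j i

/-- `j`-free part. -/
def u (j i : ℕ) : ℕ := i / j ^ Nat.maxPowDiv j i

theorem pow_v_mul_u (j i : ℕ) : j ^ v j i * u j i = i :=
  Nat.mul_div_cancel' (Nat.maxPowDiv.pow_dvd (p := j) (n := i))

theorem v_eq_zero {j r : ℕ} (h : ¬ j ∣ r) : v j r = 0 := by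
  by_contra hv
  exact h <| dvd_trans (dvd_pow_self j hv) (Nat.maxPowDiv.pow_dvd (p := j) (n := r))

theorem u_eq_self {j r : ℕ} (h : ¬ j ∣ r) : u j r = r := by
  unfold u
  rw [show Nat.maxPowDiv j r = 0 from v_eq_zero h, pow_zero, Nat.div_one]

theorem v_pow_mul {j r : ℕ} (hj : 2 ≤ j) (h : ¬ j ∣ r) (k : ℕ) : v j (j ^ k * r) = k := by
  have hr : 0 < r := by
    rcases Nat.eq_zero_or_pos r with h0 | h0
    · exact absurd (h0 ▸ dvd_zero j) h
    · exact h0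
  unfold v
  rw [show Nat.maxPowDiv j (j ^ k * r) = _ from Nat.maxPowDiv.base_pow_mul hj hr.ne' k,
    show padicValNat j r = 0 from v_eq_zero h, zero_add]

theorem u_pow_mul {j r : ℕ} (hj : 2 ≤ j) (h : ¬ j ∣ r) (k : ℕ) : u j (j ^ k * r) = r := by
  unfold u
  rw [show Nat.maxPowDiv j (j ^ k * r) = k from v_pow_mul hj h k,
    Nat.mul_div_cancel_left _ (Nat.pow_pos (n := k) (by omega))]

theorem not_dvd_u {j i : ℕ} (hj : 2 ≤ j) (hi : 0 < i) : ¬ j ∣ u j i := by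
  intro hd
  have h1 : j ^ (v j i + 1) ∣ i := by
    obtain ⟨c, hc⟩ := hd
    refine ⟨c, ?_⟩
    rw [pow_succ, mul_assoc, ← hc, pow_v_mul_u]
  have : v j i + 1 ≤ v j i := (Nat.pow_dvd_iff_le_padicValNat (by omega : j ≠ 1) hi.ne').mp h1
  unfold v at this
  omega

theorem u_pos {j i : ℕ} (hi : 0 < i) : 0 < u j i := by
  rcases Nat.eq_zero_or_pos (u j i) with h0 | h0
  · have := pow_v_mul_u j i
    rw [h0, mul_zero] at this
    omega
  · exact h0

theorem v_mul {j m : ℕ} (hj : 2 ≤ j) (hm : 0 < m) : v j (j * m) = v j m + 1 :=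
  Nat.maxPowDiv.base_mul_eq_succ hj hm.ne'

theorem u_mul {j m : ℕ} (hj : 2 ≤ j) (hm : 0 < m) : u j (j * m) = u j m := by
  unfold u
  rw [show Nat.maxPowDiv j (j * m) = Nat.maxPowDiv j m + 1 from v_mul hj hm, pow_succ,
    mul_comm (j ^ Nat.maxPowDiv j m) j, Nat.mul_div_mul_left _ _ (by omega : 0 < j)]

theorem decomp_unique {j r r' k k' : ℕ} (hj : 2 ≤ j) (hr : ¬ j ∣ r) (hr' : ¬ j ∣ r')
    (h : j ^ k * r = j ^ k' * r') : k = k' ∧ r = r' := by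
  have hk : k = k' := by
    have h1 := v_pow_mul hj hr k
    have h2 := v_pow_mul hj hr' k'
    rw [h] at h1; omega
  subst hk
  refine ⟨rfl, ?_⟩
  exact Nat.eq_of_mul_eq_mul_left (Nat.pow_pos (n := k) (by omega)) h

/-- Digit extraction. -/
theorem digits_getD {j : ℕ} (hj : 2 ≤ j) (m k : ℕ) :
    (Nat.digits j m).getD k 0 = m / j ^ k % j := by
  induction k generalizing m with
  | zero =>
    rcases Nat.eq_zero_or_pos m with h0 | h0
    · simp [h0]
    · rw [Nat.digits_def' (by omega : 1 < j) h0]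
      simp
  | succ k ih =>
    rcases Nat.eq_zero_or_pos m with h0 | h0
    · simp [h0]
    · rw [Nat.digits_def' (by omega : 1 < j) h0]
      show (Nat.digits j (m / j)).getD k 0 = _
      rw [ih (m / j), Nat.div_div_eq_div_mul, ← pow_succ']

/-- The "spread" operation: distribute a multiplicity given by a digit list
over parts `r, j*r, j^2*r, ...`. -/
def spread (j : ℕ) : ℕ → List ℕ → Multiset ℕ
  | _, [] => 0
  | r, d :: L => Multiset.replicate d r + spread j (j * r) L

theorem spread_sum (j : ℕ) (r : ℕ) (L : List ℕ) :
    (spread j r L).sum = r * Nat.ofDigits j L := by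
  induction L generalizing r with
  | nil => simp [spread]
  | cons d L ih =>
    rw [spread, Multiset.sum_add, Multiset.sum_replicate, ih (j * r), Nat.ofDigits_cons,
      smul_eq_mul]
    push_cast
    ring

theorem mem_spread {j : ℕ} {a r : ℕ} {L : List ℕ} (h : a ∈ spread j r L) :
    ∃ k, a = j ^ k * r := by
  induction L generalizing r with
  | nil => simp [spread] at h
  | cons d L ih =>
    rw [spread, Multiset.mem_add] at h
    rcases h with h | h
    · exact ⟨0, by simpa using (Multiset.eq_of_mem_replicate h)⟩
    · obtain ⟨k, hk⟩ := ih h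
      exact ⟨k + 1, by rw [hk, pow_succ]; ring⟩

theorem count_spread {j : ℕ} (hj : 2 ≤ j) {r : ℕ} (hr : 0 < r) (k : ℕ) (L : List ℕ) :
    (spread j r L).count (j ^ k * r) = L.getD k 0 := by
  induction L generalizing r k with
  | nil => simp [spread]
  | cons d L ih =>
    rw [spread, Multiset.count_add, Multiset.count_replicate]
    cases k with
    | zero =>
      rw [pow_zero, one_mul, if_pos rfl]
      have h0 : (spread j (j * r) L).count r = 0 := by
        rw [Multiset.count_eq_zero]
        intro hmem
        obtain ⟨m, hm⟩ := mem_spread hmem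
        have h1 : j * r ≤ j ^ m * (j * r) := Nat.le_mul_of_pos_left _ (Nat.pow_pos (n := m) (by omega))
        nlinarith
      rw [h0]
      rfl
    | succ k =>
      have hne : r ≠ j ^ (k + 1) * r := by
        have h2 : 1 < j ^ (k+1) := Nat.one_lt_pow (by omega) (by omega)
        nlinarith
      rw [if_neg hne, show j ^ (k + 1) * r = j ^ k * (j * r) by rw [pow_succ]; ring,
        ih (by positivity) k]
      simp

theorem count_spread_ne {j : ℕ} (hj : 2 ≤ j) {r r' : ℕ} (hr : ¬ j ∣ r) (hr' : ¬ j ∣ r')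
    (hne : r' ≠ r) (k : ℕ) (L : List ℕ) : (spread j r' L).count (j ^ k * r) = 0 := by
  rw [Multiset.count_eq_zero]
  intro hmem
  obtain ⟨m, hm⟩ := mem_spread hmem
  exact hne (decomp_unique hj hr' hr hm.symm).2

/-- The forward map on multisets (from `j`-regular to `j`-restricted). -/
def phi (j : ℕ) (s : Multiset ℕ) : Multiset ℕ :=
  ∑ r ∈ s.toFinset, spread j r (Nat.digits j (s.count r))

theorem count_phi {j : ℕ} (hj : 2 ≤ j) {s : Multiset ℕ} (hs : ∀ i ∈ s, ¬ j ∣ i)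
    {r : ℕ} (hr : ¬ j ∣ r) (k : ℕ) :
    (phi j s).count (j ^ k * r) = s.count r / j ^ k % j := by
  have hr0 : 0 < r := by
    rcases Nat.eq_zero_or_pos r with h0 | h0
    · exact absurd (h0 ▸ dvd_zero j) hr
    · exact h0
  rw [phi, Multiset.count_sum']
  rw [← digits_getD hj]
  by_cases hmem : r ∈ s.toFinset
  · rw [Finset.sum_eq_single_of_mem r hmem]
    · exact count_spread hj hr0 k _
    · intro r' hr'mem hne
      exact count_spread_ne hj hr (hs r' (Multiset.mem_toFinset.mp hr'mem)) hne k _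
  · have hc : s.count r = 0 := by
      rw [Multiset.count_eq_zero]
      exact fun h => hmem (Multiset.mem_toFinset.mpr h)
    rw [hc]
    rw [Finset.sum_eq_zero]
    · simp
    · intro r' hr'mem
      refine count_spread_ne hj hr (hs r' (Multiset.mem_toFinset.mp hr'mem)) ?_ k _
      intro h
      exact hmem (h ▸ hr'mem)

theorem mem_phi {j a : ℕ} {s : Multiset ℕ} (h : a ∈ phi j s) :
    ∃ r ∈ s, ∃ k, a = j ^ k * r := by
  rw [phi] at h
  rw [Multiset.mem_sum] at h
  obtain ⟨r, hrmem, hmem⟩ := h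
  obtain ⟨k, hk⟩ := mem_spread hmem
  exact ⟨r, Multiset.mem_toFinset.mp hrmem, k, hk⟩

theorem multiset_sum_sum {α : Type*} [DecidableEq α] (t : Finset α) (F : α → Multiset ℕ) :
    (∑ x ∈ t, F x).sum = ∑ x ∈ t, (F x).sum := by
  induction t using Finset.induction with
  | empty => simp
  | insert a s h ih => rw [Finset.sum_insert h, Finset.sum_insert h, Multiset.sum_add, ih]

theorem phi_sum {j : ℕ} (hj : 2 ≤ j) (s : Multiset ℕ) : (phi j s).sum = s.sum := by
  conv_rhs => rw [← Multiset.toFinset_sum_count_nsmul_eq s]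
  rw [phi, multiset_sum_sum, multiset_sum_sum]
  refine Finset.sum_congr rfl fun r hr => ?_
  rw [spread_sum, Nat.ofDigits_digits, ← Multiset.replicate_one r, Multiset.nsmul_replicate,
    Multiset.sum_replicate, mul_one, smul_eq_mul, mul_comm]

/-- The inverse map on multisets (from `j`-restricted to `j`-regular). -/
def psi (j : ℕ) (s : Multiset ℕ) : Multiset ℕ :=
  s.bind fun i => Multiset.replicate (j ^ v j i) (u j i)

theorem psi_sum (j : ℕ) (s : Multiset ℕ) : (psi j s).sum = s.sum := by
  rw [psi, Multiset.sum_bind]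
  congr 1
  rw [Multiset.map_congr rfl]
  · exact (Multiset.map_id s)
  · intro i _
    rw [Multiset.sum_replicate, smul_eq_mul, pow_v_mul_u]
    rfl

theorem mem_psi {j a : ℕ} {s : Multiset ℕ} (h : a ∈ psi j s) : ∃ i ∈ s, a = u j i := by
  rw [psi, Multiset.mem_bind] at h
  obtain ⟨i, hi, hmem⟩ := h
  exact ⟨i, hi, Multiset.eq_of_mem_replicate hmem⟩

theorem count_map_div {j a : ℕ} (hj : 2 ≤ j) (s : Multiset ℕ) :
    ((s.filter (j ∣ ·)).map (· / j)).count a = s.count (j * a) := by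
  rw [Multiset.count_map, Multiset.filter_filter]
  rw [show (Multiset.filter (fun i => a = i / j ∧ j ∣ i) s) = Multiset.filter (j * a = ·) s from
    Multiset.filter_congr fun i _ => by
      constructor
      · rintro ⟨h1, h2⟩; rw [h1]; exact Nat.mul_div_cancel' h2
      · rintro rfl; exact ⟨(Nat.mul_div_cancel_left a (by omega)).symm, Dvd.intro a rfl⟩]
  rw [Multiset.count, Multiset.countP_eq_card_filter]

theorem count_psi_rec {j : ℕ} (hj : 2 ≤ j) {s : Multiset ℕ} (hs : ∀ i ∈ s, 0 < i)
    {r : ℕ} (hr : ¬ j ∣ r) :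
    (psi j s).count r = s.count r + j * (psi j ((s.filter (j ∣ ·)).map (· / j))).count r := by
  have h1 : (Multiset.filter (fun i => ¬ j ∣ i) s).bind
      (fun i => Multiset.replicate (j ^ v j i) (u j i)) = Multiset.filter (fun i => ¬ j ∣ i) s := by
    rw [Multiset.bind_congr (g := fun i => {i}) ?_, Multiset.bind_singleton, Multiset.map_id']
    intro i hi
    have hnd : ¬ j ∣ i := (Multiset.mem_filter.mp hi).2
    rw [v_eq_zero hnd, u_eq_self hnd, pow_zero]
    exact Multiset.replicate_one i
  have h2 : ((Multiset.filter (j ∣ ·) s).bind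
      (fun i => Multiset.replicate (j ^ v j i) (u j i))).count r
      = j * (psi j ((s.filter (j ∣ ·)).map (· / j))).count r := by
    rw [Multiset.count_bind, psi, Multiset.count_bind, Multiset.map_map]
    simp only [Function.comp_def]
    have hpt : ∀ i ∈ Multiset.filter (j ∣ ·) s,
        (Multiset.replicate (j ^ v j i) (u j i)).count r
          = j * (Multiset.replicate (j ^ v j (i / j)) (u j (i / j))).count r := by
      intro i hi
      obtain ⟨hmem, hdvd⟩ := Multiset.mem_filter.mp hi
      have hipos : 0 < i := hs i hmem
      have hmpos : 0 < i / j := Nat.div_pos (Nat.le_of_dvd hipos hdvd) (by omega)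
      have hieq : i = j * (i / j) := (Nat.mul_div_cancel' hdvd).symm
      have hv : v j i = v j (i / j) + 1 := by
        conv_lhs => rw [hieq]
        exact v_mul hj hmpos
      have hu : u j i = u j (i / j) := by
        conv_lhs => rw [hieq]
        exact u_mul hj hmpos
      rw [hv, hu, Multiset.count_replicate, Multiset.count_replicate]
      split
      · rw [pow_succ]; ring
      · simp
    rw [Multiset.map_congr rfl hpt, Multiset.sum_map_mul_left]
  conv_lhs => rw [psi, ← Multiset.filter_add_not (j ∣ ·) s, Multiset.add_bind]
  rw [Multiset.count_add, h1, h2, Multiset.count_filter, if_pos hr, add_comm]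

theorem count_psi_digit {j : ℕ} (hj : 2 ≤ j) (k : ℕ) :
    ∀ (s : Multiset ℕ), (∀ i ∈ s, 0 < i) → (∀ a, s.count a ≤ j - 1) → ∀ {r : ℕ}, ¬ j ∣ r →
      (psi j s).count r / j ^ k % j = s.count (j ^ k * r) := by
  induction k with
  | zero =>
    intro s hpos hcnt r hr
    simp only [pow_zero, Nat.div_one, one_mul]
    rw [count_psi_rec hj hpos hr]
    have := hcnt r
    rw [Nat.add_mul_mod_self_left]
    exact Nat.mod_eq_of_lt (by omega)
  | succ k ih =>
    intro s hpos hcnt r hr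
    have hlt : s.count r < j := by have := hcnt r; omega
    have hdiv : (psi j s).count r / j ^ (k + 1)
        = (psi j ((s.filter (j ∣ ·)).map (· / j))).count r / j ^ k := by
      rw [count_psi_rec hj hpos hr, pow_succ', ← Nat.div_div_eq_div_mul,
        Nat.add_mul_div_left _ _ (by omega : 0 < j), Nat.div_eq_of_lt hlt, zero_add]
    rw [hdiv]
    have hpos' : ∀ i ∈ (s.filter (j ∣ ·)).map (· / j), 0 < i := by
      intro i hi
      obtain ⟨x, hx, hxi⟩ := Multiset.mem_map.mp hi
      obtain ⟨hxs, hxd⟩ := Multiset.mem_filter.mp hx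
      have := hpos x hxs
      subst hxi
      exact Nat.div_pos (Nat.le_of_dvd this hxd) (by omega)
    have hcnt' : ∀ a, ((s.filter (j ∣ ·)).map (· / j)).count a ≤ j - 1 := by
      intro a
      rw [count_map_div hj]
      exact hcnt _
    rw [ih _ hpos' hcnt' hr, count_map_div hj, ← mul_assoc, ← pow_succ']

theorem phi_psi {j : ℕ} (hj : 2 ≤ j) {s : Multiset ℕ} (hpos : ∀ i ∈ s, 0 < i)
    (hcnt : ∀ a, s.count a ≤ j - 1) : phi j (psi j s) = s := by
  have hreg : ∀ x ∈ psi j s, ¬ j ∣ x := by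
    intro x hx
    obtain ⟨i, hi, rfl⟩ := mem_psi hx
    exact not_dvd_u hj (hpos i hi)
  ext a
  rcases Nat.eq_zero_or_pos a with rfl | ha
  · rw [Multiset.count_eq_zero_of_notMem, Multiset.count_eq_zero_of_notMem]
    · intro h; exact absurd rfl (hpos 0 h).ne
    · intro h
      obtain ⟨r, hr, k, hk⟩ := mem_phi h
      obtain ⟨i, hi, rfl⟩ := mem_psi hr
      have h1 : 0 < u j i := u_pos (hpos i hi)
      have h2 : 0 < j ^ k * u j i := by positivity
      exact h2.ne' hk.symm
  · conv_lhs => rw [← pow_v_mul_u j a]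
    rw [count_phi hj hreg (not_dvd_u hj ha),
      count_psi_digit hj (v j a) s hpos hcnt (not_dvd_u hj ha), pow_v_mul_u]

theorem bind_replicate {α β : Type*} (n : ℕ) (a : α) (f : α → Multiset β) :
    (Multiset.replicate n a).bind f = n • f a := by
  induction n with
  | zero => simp
  | succ n ih =>
    rw [Multiset.replicate_succ, Multiset.cons_bind, ih, succ_nsmul, add_comm]

theorem psi_finset_sum {α : Type*} [DecidableEq α] (j : ℕ) (t : Finset α) (F : α → Multiset ℕ) :
    psi j (∑ x ∈ t, F x) = ∑ x ∈ t, psi j (F x) := by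
  induction t using Finset.induction with
  | empty => simp [psi]
  | insert a s h ih =>
    rw [Finset.sum_insert h, Finset.sum_insert h, psi, Multiset.add_bind, ← ih]
    rfl

theorem psi_spread {j : ℕ} (hj : 2 ≤ j) {r : ℕ} (hr : 0 < r) (L : List ℕ) :
    psi j (spread j r L) = Multiset.replicate (j ^ v j r * Nat.ofDigits j L) (u j r) := by
  induction L generalizing r with
  | nil => simp [spread, psi, Nat.ofDigits_nil]
  | cons d L ih =>
    rw [spread, psi, Multiset.add_bind, ← psi, ← psi, ih (by positivity : 0 < j * r)]
    have hv : v j (j * r) = v j r + 1 := v_mul hj hr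
    have hu : u j (j * r) = u j r := u_mul hj hr
    rw [psi, bind_replicate, Multiset.nsmul_replicate, hv, hu, ← Multiset.replicate_add]
    congr 1
    rw [Nat.ofDigits_cons]
    push_cast
    ring

theorem psi_phi {j : ℕ} (hj : 2 ≤ j) {s : Multiset ℕ} (hpos : ∀ i ∈ s, 0 < i)
    (hreg : ∀ i ∈ s, ¬ j ∣ i) : psi j (phi j s) = s := by
  rw [phi, psi_finset_sum]
  conv_rhs => rw [← Multiset.toFinset_sum_count_nsmul_eq s]
  refine Finset.sum_congr rfl fun r hr => ?_
  have hrmem := Multiset.mem_toFinset.mp hr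
  have hnd := hreg r hrmem
  have hrpos := hpos r hrmem
  rw [psi_spread hj hrpos, v_eq_zero hnd, u_eq_self hnd, pow_zero, one_mul,
    Nat.ofDigits_digits, ← Multiset.replicate_one r, Multiset.nsmul_replicate, mul_one]

end GlaisherAux

/-- Glaisher's theorem: for `j ≥ 2`, the number of partitions of `n` in which no
part appears more than `j - 1` times equals the number of `j`-regular partitions
of `n` (those in which no part is a multiple of `j`). -/
theorem glaisher (j n : ℕ) (hj : 2 ≤ j) :
    Nat.card {p : Nat.Partition n // ∀ i, p.parts.count i ≤ j - 1} =
    Nat.card {p : Nat.Partition n // ∀ i ∈ p.parts, ¬ j ∣ i} := by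
  classical
  refine Nat.card_congr (Equiv.mk (fun p => ⟨⟨GlaisherAux.psi j p.1.parts, ?_, ?_⟩, ?_⟩)
    (fun q => ⟨⟨GlaisherAux.phi j q.1.parts, ?_, ?_⟩, ?_⟩) ?_ ?_)
  · intro i hi
    obtain ⟨x, hx, rfl⟩ := GlaisherAux.mem_psi hi
    exact GlaisherAux.u_pos (p.1.parts_pos hx)
  · rw [GlaisherAux.psi_sum, p.1.parts_sum]
  · intro i hi
    obtain ⟨x, hx, rfl⟩ := GlaisherAux.mem_psi hi
    exact GlaisherAux.not_dvd_u hj (p.1.parts_pos hx)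
  · intro i hi
    obtain ⟨r, hr, k, rfl⟩ := GlaisherAux.mem_phi hi
    have h1 := q.1.parts_pos hr
    positivity
  · rw [GlaisherAux.phi_sum hj, q.1.parts_sum]
  · intro i
    rcases Nat.eq_zero_or_pos i with rfl | hi
    · rw [Multiset.count_eq_zero_of_notMem]
      · omega
      · intro h
        obtain ⟨r, hr, k, hk⟩ := GlaisherAux.mem_phi h
        have h1 := q.1.parts_pos hr
        have h2 : 0 < j ^ k * r := by positivity
        exact h2.ne' hk.symm
    · have hreg : ∀ x ∈ q.1.parts, ¬ j ∣ x := q.2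
      conv_lhs => rw [← GlaisherAux.pow_v_mul_u j i]
      rw [GlaisherAux.count_phi hj hreg (GlaisherAux.not_dvd_u hj hi)]
      have := Nat.mod_lt (q.1.parts.count (GlaisherAux.u j i) / j ^ GlaisherAux.v j i)
        (show 0 < j by omega)
      omega
  · intro p
    exact Subtype.ext (Nat.Partition.ext
      (GlaisherAux.phi_psi hj (fun i hi => p.1.parts_pos hi) p.2))
  · intro q
    exact Subtype.ext (Nat.Partition.ext
      (GlaisherAux.psi_phi hj (fun i hi => q.1.parts_pos hi) q.2))
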